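/- Fix m ≥ 1 and let M ∈ ℚ[[z]] be the unique formal power series satisfying M = 1 + z M^{m+1}. Then, in the ring ℚ[u][[z]] of formal power series in z with polynomial coefficients in u, exp( Σ_{k≥1} (z^k/k) Σ_{i=1}^{k} binom((m+1)k, k−i) u^i ) = 1 / (1 − u(M − 1)); equivalently, it equals 1/(1 − z u M^{m+1}). -/

import Mathlib

open PowerSeries


private lemma aux_choose (m n r : ℕ) :
    (m+1)*(n+1) * (((m+1)*(n+1)+r).choose (n+1))
      = (m*((m+1)*(n+1)+r) + r + m + 1) * (((m+1)*(n+1)+r).choose n) := by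
  have h := Nat.choose_succ_right_eq ((m+1)*(n+1)+r) n
  have hsub : (m+1)*(n+1)+r - n = m*(n+1)+r+1 := by
    have h2 : (m+1)*(n+1) = m*(n+1)+n+1 := by ring
    rw [h2]; omega
  rw [hsub] at h
  calc (m+1)*(n+1) * (((m+1)*(n+1)+r).choose (n+1))
      = (m+1)*((((m+1)*(n+1)+r).choose (n+1))*(n+1)) := by ring
    _ = (m+1)*((((m+1)*(n+1)+r).choose n)*(m*(n+1)+r+1)) := by rw [h]
    _ = (m*((m+1)*(n+1)+r) + r + m + 1) * (((m+1)*(n+1)+r).choose n) := by ring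

private lemma coeffM (m : ℕ) (M : PowerSeries ℚ) (hM : M = 1 + PowerSeries.X * M ^ (m + 1)) :
    ∀ n r : ℕ, (((m+1)*n + r : ℕ) : ℚ) * PowerSeries.coeff (R := ℚ) n (M ^ r)
      = (r : ℚ) * (((m+1)*n + r).choose n : ℚ) := by
  have hc : constantCoeff (R := ℚ) M = 1 := by
    conv_lhs => rw [hM]
    simp
  intro n
  induction n with
  | zero =>
    intro r
    simp [PowerSeries.coeff_zero_eq_constantCoeff, map_pow, hc]
  | succ n ih =>
    intro r
    induction r with
    | zero => simp
    | succ r ihr =>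
      have hsplit : M ^ (r+1) = M ^ r + PowerSeries.X * M ^ (r+1+m) := by
        calc M ^ (r+1) = M ^ r * M := pow_succ M r
        _ = M ^ r * (1 + PowerSeries.X * M ^ (m+1)) := by rw [← hM]
        _ = M ^ r + PowerSeries.X * M ^ (r+1+m) := by
              rw [mul_add, mul_one, show r+1+m = r + (m+1) from by ring, pow_add]; ring
      have hca : PowerSeries.coeff (R := ℚ) (n+1) (M ^ (r+1))
          = PowerSeries.coeff (R := ℚ) (n+1) (M^r) + PowerSeries.coeff (R := ℚ) n (M^(r+1+m)) := by
        rw [hsplit, map_add, PowerSeries.coeff_succ_X_mul]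
      have h1 := ihr
      have h2 := ih (r+1+m)
      rw [show (m+1)*n + (r+1+m) = (m+1)*(n+1)+r from by ring] at h2
      rw [show (m+1)*(n+1) + (r+1) = ((m+1)*(n+1)+r)+1 from by ring, hca]
      have h3 : ((((m+1)*(n+1)+r)+1).choose (n+1) : ℚ)
          = (((m+1)*(n+1)+r).choose n : ℚ) + (((m+1)*(n+1)+r).choose (n+1) : ℚ) := by
        exact_mod_cast congrArg (Nat.cast (R := ℚ)) (Nat.choose_succ_succ ((m+1)*(n+1)+r) n)
      have h4 : ((m:ℚ)+1)*((n:ℚ)+1) * (((m+1)*(n+1)+r).choose (n+1) : ℚ)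
          = ((m:ℚ)*(((m:ℚ)+1)*((n:ℚ)+1)+(r:ℚ)) + (r:ℚ) + (m:ℚ) + 1) * (((m+1)*(n+1)+r).choose n : ℚ) := by
        exact_mod_cast congrArg (Nat.cast (R := ℚ)) (aux_choose m n r)
      have hAne : (((m+1)*(n+1)+r : ℕ) : ℚ) ≠ 0 := by
        have : 0 < (m+1)*(n+1)+r := by positivity
        exact_mod_cast this.ne'
      apply mul_left_cancel₀ hAne
      push_cast at h1 h2 h3 ⊢
      linear_combination (((m:ℚ)+1)*((n:ℚ)+1)+(r:ℚ)+1)*h1 + (((m:ℚ)+1)*((n:ℚ)+1)+(r:ℚ)+1)*h2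
        - (((m:ℚ)+1)*((n:ℚ)+1)+(r:ℚ))*((r:ℚ)+1)*h3 - h4

private lemma coeffW (m : ℕ) (M : PowerSeries ℚ) (hM : M = 1 + PowerSeries.X * M ^ (m + 1)) :
    ∀ k j : ℕ, 1 ≤ j → j ≤ k →
      (k : ℚ) * PowerSeries.coeff (R := ℚ) k ((PowerSeries.X * M ^ (m+1)) ^ j)
        = (j : ℚ) * (((m+1)*k).choose (k-j) : ℚ) := by
  intro k j hj hjk
  have h1 : (PowerSeries.X * M ^ (m+1)) ^ j = PowerSeries.X ^ j * M ^ ((m+1)*j) := by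
    rw [mul_pow, ← pow_mul, mul_comm (m+1) j]
  have h2 : PowerSeries.coeff (R := ℚ) k ((PowerSeries.X * M ^ (m+1)) ^ j)
      = PowerSeries.coeff (R := ℚ) (k-j) (M ^ ((m+1)*j)) := by
    rw [h1]
    have hc := PowerSeries.coeff_X_pow_mul (M ^ ((m+1)*j)) j (k-j)
    rw [show (k-j)+j = k from by omega] at hc
    exact hc
  have h3 := coeffM m M hM (k-j) ((m+1)*j)
  rw [show (m+1)*(k-j) + (m+1)*j = (m+1)*k from by
    rw [← Nat.mul_add]; congr 1; omega] at h3
  rw [h2]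
  have hmne : ((m:ℚ)+1) ≠ 0 := by positivity
  apply mul_left_cancel₀ hmne
  push_cast at h3 ⊢
  linear_combination h3

/-- The exponential of a formal power series over `ℚ[u]` (intended for series with zero
constant term): the coefficient of `z^N` in `∑_k f^k / k!`. -/
noncomputable def expPSu (f : PowerSeries (Polynomial ℚ)) : PowerSeries (Polynomial ℚ) :=
  PowerSeries.mk fun N =>
    ∑ k ∈ Finset.range (N + 1),
      (Nat.factorial k : ℚ)⁻¹ • PowerSeries.coeff (R := Polynomial ℚ) N (f ^ k)

private lemma pow_coeff_zero (f : PowerSeries (Polynomial ℚ))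
    (hf : PowerSeries.constantCoeff (R := Polynomial ℚ) f = 0) {j k : ℕ} (h : j < k) :
    PowerSeries.coeff (R := Polynomial ℚ) j (f ^ k) = 0 := by
  obtain ⟨g, hg⟩ := PowerSeries.X_dvd_iff.mpr hf
  rw [hg, mul_pow, PowerSeries.coeff_X_pow_mul', if_neg (by omega)]

private lemma psDerivMulQ (f g : PowerSeries (Polynomial ℚ)) :
    d⁄dX (Polynomial ℚ) (f * g)
      = f * d⁄dX (Polynomial ℚ) g + g * d⁄dX (Polynomial ℚ) f :=
  PowerSeries.derivativeFun_mul f g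

private lemma psDerivPowQ (f : PowerSeries (Polynomial ℚ)) : ∀ k : ℕ,
    d⁄dX (Polynomial ℚ) (f ^ (k+1))
      = ((k : ℚ) + 1) • (f ^ k * d⁄dX (Polynomial ℚ) f) := by
  intro k
  induction k with
  | zero => simp
  | succ k ih =>
    have h1 : f ^ (k+2) = f ^ (k+1) * f := by ring
    rw [h1, psDerivMulQ, ih, mul_smul_comm]
    have h2 : f * (f ^ k * d⁄dX (Polynomial ℚ) f) = f ^ (k+1) * d⁄dX (Polynomial ℚ) f := by
      ring
    rw [h2]
    push_cast
    module

private lemma deriv_expPSu (f : PowerSeries (Polynomial ℚ))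
    (hf : PowerSeries.constantCoeff (R := Polynomial ℚ) f = 0) :
    d⁄dX (Polynomial ℚ) (expPSu f)
      = d⁄dX (Polynomial ℚ) f * expPSu f := by
  refine PowerSeries.ext fun n => ?_
  have hE : ∀ j ≤ n, PowerSeries.coeff (R := Polynomial ℚ) j (expPSu f)
      = ∑ k ∈ Finset.range (n + 1),
          (Nat.factorial k : ℚ)⁻¹ • PowerSeries.coeff (R := Polynomial ℚ) j (f ^ k) := by
    intro j hj
    rw [expPSu, PowerSeries.coeff_mk]
    apply Finset.sum_subset (by intro x hx; simp at hx ⊢; omega)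
    intro k _ hk
    simp only [Finset.mem_range, not_lt] at hk
    rw [pow_coeff_zero f hf (by omega), smul_zero]
  -- RHS
  rw [PowerSeries.coeff_mul]
  have hR : ∑ p ∈ Finset.HasAntidiagonal.antidiagonal n,
        PowerSeries.coeff (R := Polynomial ℚ) p.1 (d⁄dX (Polynomial ℚ) f)
          * PowerSeries.coeff (R := Polynomial ℚ) p.2 (expPSu f)
      = ∑ k ∈ Finset.range (n + 1), (Nat.factorial k : ℚ)⁻¹ •
          PowerSeries.coeff (R := Polynomial ℚ) n (d⁄dX (Polynomial ℚ) f * f ^ k) := by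
    have : ∀ p ∈ Finset.HasAntidiagonal.antidiagonal n,
        PowerSeries.coeff (R := Polynomial ℚ) p.1 (d⁄dX (Polynomial ℚ) f)
          * PowerSeries.coeff (R := Polynomial ℚ) p.2 (expPSu f)
        = ∑ k ∈ Finset.range (n + 1), (Nat.factorial k : ℚ)⁻¹ •
            (PowerSeries.coeff (R := Polynomial ℚ) p.1 (d⁄dX (Polynomial ℚ) f)
              * PowerSeries.coeff (R := Polynomial ℚ) p.2 (f ^ k)) := by
      intro p hp
      rw [hE p.2 (by rw [Finset.HasAntidiagonal.mem_antidiagonal] at hp; omega), Finset.mul_sum]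
      exact Finset.sum_congr rfl fun k _ => (mul_smul_comm _ _ _)
    rw [Finset.sum_congr rfl this, Finset.sum_comm]
    refine Finset.sum_congr rfl fun k _ => ?_
    rw [PowerSeries.coeff_mul, Finset.smul_sum]
  rw [hR]
  -- LHS
  rw [PowerSeries.coeff_derivative, expPSu, PowerSeries.coeff_mk, Finset.sum_mul,
    Finset.sum_range_succ']
  have h0 : ((Nat.factorial 0 : ℚ)⁻¹ • PowerSeries.coeff (R := Polynomial ℚ) (n+1) (f ^ 0))
      * ((n : Polynomial ℚ) + 1) = 0 := by
    simp [PowerSeries.coeff_one]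
  rw [h0, add_zero]
  refine Finset.sum_congr rfl fun k _ => ?_
  have hld : PowerSeries.coeff (R := Polynomial ℚ) (n+1) (f ^ (k+1)) * ((n : Polynomial ℚ) + 1)
      = ((k : ℚ) + 1) • PowerSeries.coeff (R := Polynomial ℚ) n (d⁄dX (Polynomial ℚ) f * f ^ k) := by
    rw [← PowerSeries.coeff_derivative, psDerivPowQ, PowerSeries.coeff_smul, mul_comm (f ^ k)]
  rw [smul_mul_assoc, hld, smul_smul]
  congr 1
  rw [Nat.factorial_succ]
  push_cast
  rw [mul_inv]
  field_simp


private lemma qDerivMul (f g : PowerSeries ℚ) :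
    d⁄dX ℚ (f * g) = f * d⁄dX ℚ g + g * d⁄dX ℚ f :=
  PowerSeries.derivativeFun_mul f g

private lemma qDerivPow (f : PowerSeries ℚ) : ∀ k : ℕ,
    d⁄dX ℚ (f ^ (k+1)) = ((k : ℚ) + 1) • (f ^ k * d⁄dX ℚ f) := by
  intro k
  induction k with
  | zero => simp
  | succ k ih =>
    have h1 : f ^ (k+2) = f ^ (k+1) * f := by ring
    rw [h1, qDerivMul, ih, mul_smul_comm]
    have h2 : f * (f ^ k * d⁄dX ℚ f) = f ^ (k+1) * d⁄dX ℚ f := by ring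
    rw [h2]
    push_cast
    module

private lemma qpow_coeff_zero (m : ℕ) (M : PowerSeries ℚ) {j i : ℕ} (h : j < i) :
    PowerSeries.coeff (R := ℚ) j ((PowerSeries.X * M ^ (m+1)) ^ i) = 0 := by
  rw [mul_pow, PowerSeries.coeff_X_pow_mul', if_neg (by omega)]

/-- scaled coefficient identity including the truncation `if`. -/
private lemma F1' (m : ℕ) (M : PowerSeries ℚ) (hM : M = 1 + PowerSeries.X * M ^ (m + 1))
    (k i : ℕ) (hi : 1 ≤ i) :
    (i : ℚ) * (if i ∈ Finset.Icc 1 k then (((m+1)*k).choose (k-i) : ℚ) else 0)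
      = (k : ℚ) * PowerSeries.coeff (R := ℚ) k ((PowerSeries.X * M ^ (m+1)) ^ i) := by
  by_cases h : i ≤ k
  · rw [if_pos (Finset.mem_Icc.mpr ⟨hi, h⟩)]
    exact (coeffW m M hM k i hi h).symm
  · rw [if_neg (by simp [Finset.mem_Icc]; omega), mul_zero,
      qpow_coeff_zero m M (by omega), mul_zero]

private lemma key_ode (m : ℕ) (M : PowerSeries ℚ) (hM : M = 1 + PowerSeries.X * M ^ (m + 1)) :
    d⁄dX (Polynomial ℚ) (PowerSeries.mk fun k =>
        if k = 0 then 0 else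
          (k : ℚ)⁻¹ • ∑ i ∈ Finset.Icc 1 k,
            (Nat.choose ((m + 1) * k) (k - i) : Polynomial ℚ) * Polynomial.X ^ i)
      = d⁄dX (Polynomial ℚ) (PowerSeries.C (R := Polynomial ℚ) Polynomial.X
            * PowerSeries.map (Polynomial.C : ℚ →+* Polynomial ℚ)
                (PowerSeries.X * M ^ (m+1)))
        + d⁄dX (Polynomial ℚ) (PowerSeries.mk fun k =>
            if k = 0 then 0 else
              (k : ℚ)⁻¹ • ∑ i ∈ Finset.Icc 1 k,
                (Nat.choose ((m + 1) * k) (k - i) : Polynomial ℚ) * Polynomial.X ^ i)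
          * (PowerSeries.C (R := Polynomial ℚ) Polynomial.X
            * PowerSeries.map (Polynomial.C : ℚ →+* Polynomial ℚ)
                (PowerSeries.X * M ^ (m+1))) := by
  set Wq : PowerSeries ℚ := PowerSeries.X * M ^ (m+1) with hWq
  set K : PowerSeries (Polynomial ℚ) := PowerSeries.mk fun k =>
      if k = 0 then 0 else
        (k : ℚ)⁻¹ • ∑ i ∈ Finset.Icc 1 k,
          (Nat.choose ((m + 1) * k) (k - i) : Polynomial ℚ) * Polynomial.X ^ i with hK
  set V : PowerSeries (Polynomial ℚ) := PowerSeries.C (R := Polynomial ℚ) Polynomial.X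
      * PowerSeries.map (Polynomial.C : ℚ →+* Polynomial ℚ) Wq with hV
  -- coefficient formulas
  have cdK : ∀ n : ℕ, PowerSeries.coeff (R := Polynomial ℚ) n (d⁄dX (Polynomial ℚ) K)
      = ∑ i ∈ Finset.Icc 1 (n+1),
          (Nat.choose ((m + 1) * (n+1)) (n+1-i) : Polynomial ℚ) * Polynomial.X ^ i := by
    intro n
    rw [PowerSeries.coeff_derivative, hK, PowerSeries.coeff_mk, if_neg (Nat.succ_ne_zero n),
      smul_mul_assoc]
    have hcast : ((n : Polynomial ℚ) + 1) = Polynomial.C ((n:ℚ)+1) := by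
      simp [Polynomial.C_eq_natCast]
    rw [hcast, mul_comm _ (Polynomial.C ((n:ℚ)+1)), ← Polynomial.smul_eq_C_mul, smul_smul]
    have hone : ((n+1 : ℕ):ℚ)⁻¹ * ((n:ℚ)+1) = 1 := by
      push_cast
      field_simp
    rw [hone, one_smul]
  have cV : ∀ b : ℕ, PowerSeries.coeff (R := Polynomial ℚ) b V
      = Polynomial.X * Polynomial.C (PowerSeries.coeff (R := ℚ) b Wq) := by
    intro b
    rw [hV, ← PowerSeries.smul_eq_C_mul, PowerSeries.coeff_smul, PowerSeries.coeff_map,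
      smul_eq_mul]
  have cdV : ∀ n : ℕ, PowerSeries.coeff (R := Polynomial ℚ) n (d⁄dX (Polynomial ℚ) V)
      = Polynomial.X * Polynomial.C (((n:ℚ)+1) * PowerSeries.coeff (R := ℚ) (n+1) Wq) := by
    intro n
    rw [PowerSeries.coeff_derivative, cV]
    have hcast : ((n : Polynomial ℚ) + 1) = Polynomial.C ((n:ℚ)+1) := by
      simp [Polynomial.C_eq_natCast]
    rw [hcast, Polynomial.C_mul]
    ring
  -- scalar derivative identity
  have hser : ∀ e : ℕ, 1 ≤ e →
      (e:ℚ) • d⁄dX ℚ (Wq^(e+1)) = ((e:ℚ)+1) • (d⁄dX ℚ (Wq^e) * Wq) := by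
    intro e he
    obtain ⟨j, rfl⟩ : ∃ j, e = j + 1 := ⟨e - 1, by omega⟩
    rw [qDerivPow, show Wq ^ (j+1) = Wq ^ (j+1-1+1) from by norm_num, qDerivPow]
    rw [smul_mul_assoc, smul_smul, smul_smul]
    have h2 : Wq ^ (j+1-1) * d⁄dX ℚ Wq * Wq = Wq ^ (j+1) * d⁄dX ℚ Wq := by
      rw [show j+1-1 = j from rfl]; ring
    rw [h2]
    push_cast
    module
  refine PowerSeries.ext fun n => ?_
  have hcoe : ∀ e : ℕ, 1 ≤ e →
      (e:ℚ) * (PowerSeries.coeff (R := ℚ) (n+1) (Wq^(e+1)) * ((n:ℚ)+1))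
        = ((e:ℚ)+1) * ∑ p ∈ Finset.HasAntidiagonal.antidiagonal n,
            (PowerSeries.coeff (R := ℚ) (p.1+1) (Wq^e) * ((p.1:ℚ)+1)) * PowerSeries.coeff (R := ℚ) p.2 Wq := by
    intro e he
    have h := congrArg (PowerSeries.coeff (R := ℚ) n) (hser e he)
    simp only [PowerSeries.coeff_smul, smul_eq_mul, PowerSeries.coeff_mul,
      PowerSeries.coeff_derivative, Finset.mul_sum] at h ⊢
    exact h
  rw [map_add, PowerSeries.coeff_mul, cdK n, cdV n]
  have hterm : ∀ p ∈ Finset.HasAntidiagonal.antidiagonal n,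
      PowerSeries.coeff (R := Polynomial ℚ) p.1 (d⁄dX (Polynomial ℚ) K)
        * PowerSeries.coeff (R := Polynomial ℚ) p.2 V
      = (∑ i ∈ Finset.Icc 1 (p.1+1),
            (Nat.choose ((m+1)*(p.1+1)) (p.1+1-i) : Polynomial ℚ) * Polynomial.X ^ i)
          * (Polynomial.X * Polynomial.C (PowerSeries.coeff (R := ℚ) p.2 Wq)) := by
    intro p _
    rw [cdK, cV]
  rw [Finset.sum_congr rfl hterm]
  have hL : ∀ (k d : ℕ), (∑ i ∈ Finset.Icc 1 k,
        (Nat.choose ((m+1)*k) (k-i) : Polynomial ℚ) * Polynomial.X ^ i).coeff d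
      = (if d ∈ Finset.Icc 1 k then ((((m+1)*k).choose (k-d)) : ℚ) else 0) := by
    intro k d
    rw [Polynomial.finset_sum_coeff]
    have h1 : ∀ i ∈ Finset.Icc 1 k,
        ((Nat.choose ((m+1)*k) (k-i) : Polynomial ℚ) * Polynomial.X ^ i).coeff d
        = if d = i then ((((m+1)*k).choose (k-i)) : ℚ) else 0 := by
      intro i _
      rw [← Polynomial.C_eq_natCast, Polynomial.coeff_C_mul, Polynomial.coeff_X_pow,
        mul_ite, mul_one, mul_zero]
    rw [Finset.sum_congr rfl h1, Finset.sum_ite_eq]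
  have hXC : ∀ (x : ℚ) (d : ℕ), (Polynomial.X * Polynomial.C x).coeff d
      = if d = 1 then x else 0 := by
    intro x d
    rw [mul_comm, Polynomial.coeff_C_mul, Polynomial.coeff_X]
    by_cases h : d = 1
    · subst h; simp
    · rw [if_neg (by omega), if_neg h, mul_zero]
  refine Polynomial.ext fun d => ?_
  rw [Polynomial.coeff_add, hL, hXC, Polynomial.finset_sum_coeff]
  cases d with
  | zero =>
    rw [if_neg (by simp), if_neg (by omega)]
    have h0 : ∀ p ∈ Finset.HasAntidiagonal.antidiagonal n,
        ((∑ i ∈ Finset.Icc 1 (p.1+1),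
            (Nat.choose ((m+1)*(p.1+1)) (p.1+1-i) : Polynomial ℚ) * Polynomial.X ^ i)
          * (Polynomial.X * Polynomial.C (PowerSeries.coeff (R := ℚ) p.2 Wq))).coeff 0 = 0 := by
      intro p _
      have hre : (∑ i ∈ Finset.Icc 1 (p.1+1),
            (Nat.choose ((m+1)*(p.1+1)) (p.1+1-i) : Polynomial ℚ) * Polynomial.X ^ i)
          * (Polynomial.X * Polynomial.C (PowerSeries.coeff (R := ℚ) p.2 Wq))
          = (Polynomial.C (PowerSeries.coeff (R := ℚ) p.2 Wq)
              * ∑ i ∈ Finset.Icc 1 (p.1+1),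
                  (Nat.choose ((m+1)*(p.1+1)) (p.1+1-i) : Polynomial ℚ) * Polynomial.X ^ i)
            * Polynomial.X := by ring
      rw [hre]
      simp
    rw [Finset.sum_congr rfl h0, Finset.sum_const_zero, add_zero]
  | succ e =>
    have hT : ∀ p ∈ Finset.HasAntidiagonal.antidiagonal n,
        ((∑ i ∈ Finset.Icc 1 (p.1+1),
            (Nat.choose ((m+1)*(p.1+1)) (p.1+1-i) : Polynomial ℚ) * Polynomial.X ^ i)
          * (Polynomial.X * Polynomial.C (PowerSeries.coeff (R := ℚ) p.2 Wq))).coeff (e+1)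
        = PowerSeries.coeff (R := ℚ) p.2 Wq
            * (if e ∈ Finset.Icc 1 (p.1+1) then ((((m+1)*(p.1+1)).choose (p.1+1-e)) : ℚ) else 0) := by
      intro p _
      have hre : (∑ i ∈ Finset.Icc 1 (p.1+1),
            (Nat.choose ((m+1)*(p.1+1)) (p.1+1-i) : Polynomial ℚ) * Polynomial.X ^ i)
          * (Polynomial.X * Polynomial.C (PowerSeries.coeff (R := ℚ) p.2 Wq))
          = (Polynomial.C (PowerSeries.coeff (R := ℚ) p.2 Wq)
              * ∑ i ∈ Finset.Icc 1 (p.1+1),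
                  (Nat.choose ((m+1)*(p.1+1)) (p.1+1-i) : Polynomial ℚ) * Polynomial.X ^ i)
            * Polynomial.X := by ring
      rw [hre, Polynomial.coeff_mul_X, Polynomial.coeff_C_mul, hL]
    rw [Finset.sum_congr rfl hT]
    by_cases he : e = 0
    · subst he
      rw [if_pos (Finset.mem_Icc.mpr ⟨le_rfl, by omega⟩), if_pos rfl]
      have hsum0 : ∑ p ∈ Finset.HasAntidiagonal.antidiagonal n, (PowerSeries.coeff (R := ℚ) p.2 Wq
          * (if 0 ∈ Finset.Icc 1 (p.1+1) then ((((m+1)*(p.1+1)).choose (p.1+1-0)) : ℚ) else 0)) = 0 := by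
        refine Finset.sum_eq_zero fun p _ => ?_
        rw [if_neg (by simp), mul_zero]
      rw [hsum0, add_zero, show n+1-1 = n from rfl]
      have hw := coeffW m M hM (n+1) 1 le_rfl (by omega)
      rw [pow_one] at hw
      push_cast at hw ⊢
      linear_combination -hw
    · have he1 : 1 ≤ e := by omega
      rw [if_neg (show ¬((e+1:ℕ) = 1) from by omega), zero_add]
      have hne : ((e:ℚ) * ((e:ℚ)+1)) ≠ 0 := by
        have : (0:ℚ) < (e:ℚ) := by exact_mod_cast Nat.pos_of_ne_zero he
        positivity
      apply mul_left_cancel₀ hne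
      rw [Finset.mul_sum]
      have hRB : ∀ p ∈ Finset.HasAntidiagonal.antidiagonal n,
          (e:ℚ) * ((e:ℚ)+1) * (PowerSeries.coeff (R := ℚ) p.2 Wq
            * (if e ∈ Finset.Icc 1 (p.1+1) then ((((m+1)*(p.1+1)).choose (p.1+1-e)) : ℚ) else 0))
          = ((e:ℚ)+1) * ((PowerSeries.coeff (R := ℚ) (p.1+1) (Wq^e) * ((p.1:ℚ)+1))
              * PowerSeries.coeff (R := ℚ) p.2 Wq) := by
        intro p _
        have hF := F1' m M hM (p.1+1) e he1
        push_cast at hF ⊢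
        linear_combination ((e:ℚ)+1) * (PowerSeries.coeff (R := ℚ) p.2 Wq) * hF
      rw [Finset.sum_congr rfl hRB, ← Finset.mul_sum]
      have hFL := F1' m M hM (n+1) (e+1) (by omega)
      have hc := hcoe e he1
      push_cast at hFL hc ⊢
      linear_combination (e:ℚ) * hFL + hc



theorem exp_K_eq_inv (m : ℕ) (hm : 1 ≤ m) (M : PowerSeries ℚ)
    (hM : M = 1 + PowerSeries.X * M ^ (m + 1)) :
    expPSu (PowerSeries.mk fun k =>
          if k = 0 then 0 else
            (k : ℚ)⁻¹ • ∑ i ∈ Finset.Icc 1 k,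
              (Nat.choose ((m + 1) * k) (k - i) : Polynomial ℚ) * Polynomial.X ^ i)
        * (1 - PowerSeries.C (R := Polynomial ℚ) Polynomial.X
              * (PowerSeries.map (Polynomial.C : ℚ →+* Polynomial ℚ) M - 1)) = 1 ∧
      expPSu (PowerSeries.mk fun k =>
          if k = 0 then 0 else
            (k : ℚ)⁻¹ • ∑ i ∈ Finset.Icc 1 k,
              (Nat.choose ((m + 1) * k) (k - i) : Polynomial ℚ) * Polynomial.X ^ i)
        * (1 - PowerSeries.X * PowerSeries.C (R := Polynomial ℚ) Polynomial.X
              * (PowerSeries.map (Polynomial.C : ℚ →+* Polynomial ℚ) M) ^ (m + 1)) = 1 := by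
  set K : PowerSeries (Polynomial ℚ) := PowerSeries.mk fun k =>
      if k = 0 then 0 else
        (k : ℚ)⁻¹ • ∑ i ∈ Finset.Icc 1 k,
          (Nat.choose ((m + 1) * k) (k - i) : Polynomial ℚ) * Polynomial.X ^ i with hKdef
  set V : PowerSeries (Polynomial ℚ) := PowerSeries.C (R := Polynomial ℚ) Polynomial.X
      * PowerSeries.map (Polynomial.C : ℚ →+* Polynomial ℚ)
          (PowerSeries.X * M ^ (m+1)) with hVdef
  have hW : PowerSeries.map (Polynomial.C : ℚ →+* Polynomial ℚ) M - 1
      = PowerSeries.map (Polynomial.C : ℚ →+* Polynomial ℚ) (PowerSeries.X * M ^ (m+1)) := by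
    have h1 : M - 1 = PowerSeries.X * M ^ (m+1) := by
      conv_lhs => rw [hM]
      ring
    rw [← h1, map_sub, map_one]
  have hK0 : PowerSeries.constantCoeff (R := Polynomial ℚ) K = 0 := by
    rw [← PowerSeries.coeff_zero_eq_constantCoeff, hKdef, PowerSeries.coeff_mk, if_pos rfl]
  have hE0 : PowerSeries.constantCoeff (R := Polynomial ℚ) (expPSu K) = 1 := by
    rw [← PowerSeries.coeff_zero_eq_constantCoeff]
    simp [expPSu]
  have hV0 : PowerSeries.constantCoeff (R := Polynomial ℚ) V = 0 := by
    rw [hVdef]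
    simp
  have hdE := deriv_expPSu K hK0
  have hmain : expPSu K * (1 - V) = 1 := by
    apply PowerSeries.derivative.ext
    · have hd1 : d⁄dX (Polynomial ℚ) (1 : PowerSeries (Polynomial ℚ)) = 0 :=
        PowerSeries.derivativeFun_one
      have hd1V : d⁄dX (Polynomial ℚ) (1 - V) = - d⁄dX (Polynomial ℚ) V := by
        refine PowerSeries.ext fun n => ?_
        rw [PowerSeries.coeff_derivative, map_sub, map_neg, PowerSeries.coeff_derivative,
          PowerSeries.coeff_one, if_neg (Nat.succ_ne_zero n), zero_sub]
        ring
      rw [psDerivMulQ, hd1V, hdE, hd1]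
      have hkey := key_ode m M hM
      rw [← hKdef, ← hVdef] at hkey
      linear_combination (expPSu K) * hkey
    · rw [map_mul, hE0, map_sub, map_one, hV0, one_mul, sub_zero]
  constructor
  · rw [hW]
    exact hmain
  · have h2 : PowerSeries.X * PowerSeries.C (R := Polynomial ℚ) Polynomial.X
        * (PowerSeries.map (Polynomial.C : ℚ →+* Polynomial ℚ) M) ^ (m + 1) = V := by
      rw [hVdef, map_mul, PowerSeries.map_X, map_pow]
      ring
    rw [h2]
    exact hmain
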